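/- For every real number x ≠ 0, cosh(x) − (cosh x)⁻¹ − x · arctan(sinh x) > 0. -/

import Mathlib

open Real

private lemma hd_f (y : ℝ) :
    HasDerivAt (fun t : ℝ => Real.cosh t - (Real.cosh t)⁻¹ - t * Real.arctan (Real.sinh t))
      (Real.sinh y + Real.sinh y / Real.cosh y ^ 2 - Real.arctan (Real.sinh y) - y / Real.cosh y)
      y := by
  have h1 := Real.hasDerivAt_cosh y
  have h2 := (Real.hasDerivAt_cosh y).inv ((Real.cosh_pos y).ne')
  have h3 : HasDerivAt (fun t : ℝ => Real.arctan (Real.sinh t))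
      (1 / (1 + Real.sinh y ^ 2) * Real.cosh y) y :=
    (Real.hasDerivAt_arctan (Real.sinh y)).comp y (Real.hasDerivAt_sinh y)
  have h4 := (hasDerivAt_id y).mul h3
  have := (h1.sub h2).sub h4
  refine this.congr_deriv (Eq.symm ?_)
  simp only [id_eq, one_mul]
  have hc := (Real.cosh_pos y).ne'
  have hsq : 1 + Real.sinh y ^ 2 = Real.cosh y ^ 2 := by
    rw [Real.cosh_sq]; ring
  field_simp [hsq]
  linear_combination (-(y * Real.cosh y)) * hsq

private lemma hd_g (y : ℝ) :
    HasDerivAt (fun t : ℝ =>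
        Real.sinh t + Real.sinh t / Real.cosh t ^ 2 - Real.arctan (Real.sinh t) - t / Real.cosh t)
      (Real.sinh y * (Real.sinh y * Real.cosh y ^ 2 + y * Real.cosh y - 2 * Real.sinh y)
        / Real.cosh y ^ 3) y := by
  have hc := (Real.cosh_pos y).ne'
  have h1 := Real.hasDerivAt_sinh y
  have h2 : HasDerivAt (fun t : ℝ => Real.sinh t / Real.cosh t ^ 2)
      ((Real.cosh y * Real.cosh y ^ 2 - Real.sinh y * (2 * Real.cosh y ^ 1 * Real.sinh y))
        / (Real.cosh y ^ 2) ^ 2) y :=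
    (Real.hasDerivAt_sinh y).div ((Real.hasDerivAt_cosh y).pow 2) (by positivity)
  have h3 : HasDerivAt (fun t : ℝ => Real.arctan (Real.sinh t))
      (1 / (1 + Real.sinh y ^ 2) * Real.cosh y) y :=
    (Real.hasDerivAt_arctan (Real.sinh y)).comp y (Real.hasDerivAt_sinh y)
  have h4 : HasDerivAt (fun t : ℝ => t / Real.cosh t)
      ((1 * Real.cosh y - y * Real.sinh y) / Real.cosh y ^ 2) y :=
    (hasDerivAt_id y).div (Real.hasDerivAt_cosh y) hc
  have := ((h1.add h2).sub h3).sub h4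
  refine this.congr_deriv (Eq.symm ?_)
  have hsq : 1 + Real.sinh y ^ 2 = Real.cosh y ^ 2 := by
    rw [Real.cosh_sq]; ring
  rw [hsq]
  have hc' : Real.cosh y ≠ 0 := (Real.cosh_pos y).ne'
  field_simp
  linear_combination (-(Real.cosh y ^ 2)) * Real.cosh_sq y

private lemma lemA {y : ℝ} (hy : 0 < y) : Real.sinh y < y * Real.cosh y := by
  have hmono : StrictMonoOn (fun t : ℝ => t * Real.cosh t - Real.sinh t) (Set.Ici 0) := by
    apply strictMonoOn_of_deriv_pos (convex_Ici 0)
    · fun_prop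
    · intro t ht
      rw [interior_Ici, Set.mem_Ioi] at ht
      have hd : HasDerivAt (fun t : ℝ => t * Real.cosh t - Real.sinh t) (t * Real.sinh t) t := by
        have := ((hasDerivAt_id t).mul (Real.hasDerivAt_cosh t)).sub (Real.hasDerivAt_sinh t)
        refine this.congr_deriv (Eq.symm ?_); simp
      rw [hd.deriv]
      exact mul_pos ht (Real.sinh_pos_iff.2 ht)
  have := hmono (Set.self_mem_Ici) (Set.mem_Ici.2 hy.le) hy
  simpa using this

private lemma lemB {y : ℝ} (hy : 0 < y) :
    0 < Real.sinh y + Real.sinh y / Real.cosh y ^ 2 - Real.arctan (Real.sinh y)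
      - y / Real.cosh y := by
  have hmono : StrictMonoOn (fun t : ℝ =>
      Real.sinh t + Real.sinh t / Real.cosh t ^ 2 - Real.arctan (Real.sinh t) - t / Real.cosh t)
      (Set.Ici 0) := by
    apply strictMonoOn_of_deriv_pos (convex_Ici 0)
    · exact Continuous.continuousOn (by
        apply Continuous.sub; apply Continuous.sub; apply Continuous.add
        · exact Real.continuous_sinh
        · exact Real.continuous_sinh.div (Real.continuous_cosh.pow 2)
            (fun t => by positivity)
        · exact Real.continuous_arctan.comp Real.continuous_sinh
        · exact continuous_id.div Real.continuous_cosh (fun t => (Real.cosh_pos t).ne'))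
    · intro t ht
      rw [interior_Ici, Set.mem_Ioi] at ht
      rw [(hd_g t).deriv]
      have hs := Real.sinh_pos_iff.2 ht
      have hc := Real.cosh_pos t
      have hA := lemA ht
      have key : 0 < Real.sinh t * Real.cosh t ^ 2 + t * Real.cosh t - 2 * Real.sinh t := by
        have h1 : Real.sinh t ^ 3 ≤ Real.sinh t * Real.cosh t ^ 2 - Real.sinh t := by
          have : Real.cosh t ^ 2 = Real.sinh t ^ 2 + 1 := by rw [Real.cosh_sq]
          nlinarith
        nlinarith [pow_pos hs 3]
      positivity
  have := hmono (Set.self_mem_Ici) (Set.mem_Ici.2 hy.le) hy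
  simpa using this

private lemma lemC {y : ℝ} (hy : 0 < y) :
    0 < Real.cosh y - (Real.cosh y)⁻¹ - y * Real.arctan (Real.sinh y) := by
  have hmono : StrictMonoOn (fun t : ℝ =>
      Real.cosh t - (Real.cosh t)⁻¹ - t * Real.arctan (Real.sinh t)) (Set.Ici 0) := by
    apply strictMonoOn_of_deriv_pos (convex_Ici 0)
    · exact Continuous.continuousOn (by
        apply Continuous.sub; apply Continuous.sub
        · exact Real.continuous_cosh
        · exact Real.continuous_cosh.inv₀ (fun t => (Real.cosh_pos t).ne')
        · exact continuous_id.mul (Real.continuous_arctan.comp Real.continuous_sinh))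
    · intro t ht
      rw [interior_Ici, Set.mem_Ioi] at ht
      rw [(hd_f t).deriv]
      exact lemB ht
  have := hmono (Set.self_mem_Ici) (Set.mem_Ici.2 hy.le) hy
  simpa using this

theorem stmt_0 (x : ℝ) (hx : x ≠ 0) :
    Real.cosh x - (Real.cosh x)⁻¹ - x * Real.arctan (Real.sinh x) > 0 := by
  rcases hx.lt_or_gt with h | h
  · have := lemC (y := -x) (by linarith)
    simpa [Real.cosh_neg, Real.sinh_neg, Real.arctan_neg] using this
  · exact lemC h
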